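/- Let 0 < c < 1 and suppose P(x) = (x, √(1 - ‖x‖²)) is the Simple-LSH transformation applied to vectors normalized so that ‖x‖ ≤ 1 with global bound M (i.e., x replaced by x/M). Then an (S, c)-MIPS instance is transformed into an angular similarity instance with cosine similarities S/M and cS/M: if ⟨q, x⟩ ≥ S then the cosine similarity of P(q) and P(x/M) is ≥ S/M, and if ⟨q, x⟩ ≤ cS then it is ≤ cS/M. -/

import Mathlib

open Real RealInnerProductSpace

noncomputable def simpleLSH {d : ℕ} (y : EuclideanSpace ℝ (Fin d)) :
    EuclideanSpace ℝ (Fin (d + 1)) :=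
  (EuclideanSpace.equiv (Fin (d + 1)) ℝ).symm
    (Fin.snoc (EuclideanSpace.equiv (Fin d) ℝ y) (Real.sqrt (1 - ‖y‖ ^ 2)))

lemma inner_simpleLSH {d : ℕ} (a b : EuclideanSpace ℝ (Fin d)) :
    ⟪simpleLSH a, simpleLSH b⟫ =
      ⟪a, b⟫ + Real.sqrt (1 - ‖a‖ ^ 2) * Real.sqrt (1 - ‖b‖ ^ 2) := by
  simp only [simpleLSH, PiLp.inner_apply, RCLike.inner_apply, conj_trivial,
    EuclideanSpace.equiv, Equiv.coe_fn_symm_mk, Equiv.coe_fn_mk]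
  rw [Fin.sum_univ_castSucc]
  simp [Fin.snoc_castSucc, Fin.snoc_last]
  ring

lemma norm_simpleLSH {d : ℕ} (y : EuclideanSpace ℝ (Fin d)) (h : ‖y‖ ≤ 1) :
    ‖simpleLSH y‖ = 1 := by
  have h1 : (0:ℝ) ≤ 1 - ‖y‖ ^ 2 := by nlinarith [norm_nonneg y]
  have := inner_simpleLSH y y
  rw [real_inner_self_eq_norm_sq, real_inner_self_eq_norm_sq,
    Real.mul_self_sqrt h1] at this
  nlinarith [norm_nonneg (simpleLSH y)]

theorem simpleLSH_transform_mips (d : ℕ) (c S M : ℝ) (q x : EuclideanSpace ℝ (Fin d))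
    (hc0 : 0 < c) (hc1 : c < 1) (hM : 0 < M) (hq : ‖q‖ = 1) (hx : ‖x‖ ≤ M) :
    (⟪q, x⟫ ≥ S →
      ⟪simpleLSH q, simpleLSH ((1 / M) • x)⟫ /
        (‖simpleLSH q‖ * ‖simpleLSH ((1 / M) • x)‖) ≥ S / M) ∧
    (⟪q, x⟫ ≤ c * S →
      ⟪simpleLSH q, simpleLSH ((1 / M) • x)⟫ /
        (‖simpleLSH q‖ * ‖simpleLSH ((1 / M) • x)‖) ≤ c * S / M) := by
  have hxn : ‖(1 / M) • x‖ ≤ 1 := by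
    rw [norm_smul, Real.norm_eq_abs, abs_of_pos (by positivity : (0:ℝ) < 1 / M)]
    rw [div_mul_eq_mul_div, one_mul, div_le_one hM]
    exact hx
  have hinner : ⟪simpleLSH q, simpleLSH ((1 / M) • x)⟫ = ⟪q, x⟫ / M := by
    rw [inner_simpleLSH, hq]
    simp [real_inner_smul_right, div_mul_eq_mul_div, one_mul, PiLp.inner_apply]
    rw [Finset.sum_div]
    exact Finset.sum_congr rfl fun i _ => by field_simp
  rw [hinner, norm_simpleLSH q (le_of_eq hq), norm_simpleLSH _ hxn, mul_one, div_one]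
  constructor
  · intro h
    exact div_le_div_of_nonneg_right h hM.le
  · intro h
    exact div_le_div_of_nonneg_right h hM.le
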